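/- Let γ : ℝ → ℝ^d be twice continuously differentiable, let t ∈ ℝ, let k ≥ 1 be an integer, and let h > 0. Then ‖γ'(t) − (1/k) · Σ_{j=1}^{k} (γ(t + j·h) − γ(t − j·h)) / (2·j·h)‖ ≤ (k·h/2) · sup_{s ∈ [t − k·h, t + k·h]} ‖γ''(s)‖, where ‖·‖ is the Euclidean norm on ℝ^d. -/

import Mathlib

open Finset

private lemma sum_Icc_id_real (k : ℕ) :
    ∑ j ∈ Finset.Icc 1 k, ((j : ℝ)) = (k : ℝ) * ((k : ℝ) + 1) / 2 := by
  induction k with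
  | zero => simp
  | succ n ih =>
    rw [Finset.sum_Icc_succ_top (by omega : 1 ≤ n + 1), ih]
    push_cast
    ring

/-- **Error bound for the averaged centered-difference derivative estimator.**
If `γ : ℝ → ℝ^d` is `C²`, `k ≥ 1` and `h > 0`, then the average of the `k` centered
differences with steps `h, 2h, …, kh` approximates `γ'(t)` with error at most
`(kh/2) · sup_{s ∈ [t−kh, t+kh]} ‖γ''(s)‖`. -/
theorem avg_centered_difference_error_bound {d : ℕ} (γ : ℝ → EuclideanSpace ℝ (Fin d))
    (hγ : ContDiff ℝ 2 γ) (t : ℝ) (k : ℕ) (hk : 1 ≤ k) (h : ℝ) (hh : 0 < h) :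
    ‖deriv γ t -
        (1 / (k : ℝ)) •
          ∑ j ∈ Finset.Icc 1 k,
            (2 * (j : ℝ) * h)⁻¹ • (γ (t + j * h) - γ (t - j * h))‖ ≤
      ((k : ℝ) * h / 2) *
        sSup ((fun s => ‖deriv (deriv γ) s‖) '' Set.Icc (t - k * h) (t + k * h)) := by
  have h2 : (2 : WithTop ℕ∞) = 1 + 1 := by norm_num
  have hγ1 : ContDiff ℝ 1 (deriv γ) := (contDiff_succ_iff_deriv.mp (h2 ▸ hγ)).2.2
  have hdiff : Differentiable ℝ γ := (contDiff_succ_iff_deriv.mp (h2 ▸ hγ)).1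
  have hdiff1 : Differentiable ℝ (deriv γ) := (contDiff_one_iff_deriv.mp hγ1).1
  have hcont2 : Continuous (deriv (deriv γ)) := (contDiff_one_iff_deriv.mp hγ1).2
  set M := sSup ((fun s => ‖deriv (deriv γ) s‖) '' Set.Icc (t - k * h) (t + k * h)) with hM
  have hkh : 0 < (k : ℝ) * h := by positivity
  have htI : t ∈ Set.Icc (t - k * h) (t + k * h) := by
    constructor <;> nlinarith
  have hbdd : BddAbove ((fun s => ‖deriv (deriv γ) s‖) '' Set.Icc (t - k * h) (t + k * h)) :=
    (isCompact_Icc.image_of_continuousOn (hcont2.norm.continuousOn)).bddAbove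
  have hMle : ∀ s ∈ Set.Icc (t - k * h) (t + k * h), ‖deriv (deriv γ) s‖ ≤ M :=
    fun s hs => le_csSup hbdd ⟨s, hs, rfl⟩
  have hM0 : 0 ≤ M := le_trans (norm_nonneg _) (hMle t htI)
  -- Lipschitz bound for deriv γ on the interval
  have hlip : ∀ s ∈ Set.Icc (t - k * h) (t + k * h),
      ‖deriv γ s - deriv γ t‖ ≤ M * |s - t| := by
    intro s hs
    have := Convex.norm_image_sub_le_of_norm_hasDerivWithin_le
      (f := deriv γ) (f' := deriv (deriv γ)) (s := Set.Icc (t - k * h) (t + k * h))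
      (fun x _ => (hdiff1 x).hasDerivAt.hasDerivWithinAt) hMle (convex_Icc _ _) htI hs
    simpa [Real.norm_eq_abs] using this
  -- Key estimate for a single centered difference
  have key : ∀ a : ℝ, 0 < a → a ≤ (k : ℝ) * h →
      ‖deriv γ t - (2 * a)⁻¹ • (γ (t + a) - γ (t - a))‖ ≤ M * a / 2 := by
    intro a ha hak
    set v := deriv γ t with hv
    set g : ℝ → EuclideanSpace ℝ (Fin d) :=
      fun s => γ (t + s) - γ (t - s) - (2 * s) • v with hg
    have hgderiv : ∀ s : ℝ,
        HasDerivAt g (deriv γ (t + s) + deriv γ (t - s) - (2 : ℝ) • v) s := by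
      intro s
      have h1 : HasDerivAt (fun s : ℝ => γ (t + s)) (deriv γ (t + s)) s := by
        have hu : HasDerivAt (fun x : ℝ => t + x) 1 s := by
          simpa using (hasDerivAt_id s).const_add t
        have := HasDerivAt.scomp (x := s) (hdiff (t + s)).hasDerivAt hu
        simpa [Function.comp_def] using this
      have h2 : HasDerivAt (fun s : ℝ => γ (t - s)) (-deriv γ (t - s)) s := by
        have hu : HasDerivAt (fun x : ℝ => t - x) (-1) s := by
          simpa using (hasDerivAt_id s).const_sub t
        have := HasDerivAt.scomp (x := s) (hdiff (t - s)).hasDerivAt hu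
        simpa [Function.comp_def] using this
      have h3 : HasDerivAt (fun s : ℝ => (2 * s) • v) ((2 : ℝ) • v) s := by
        have := ((hasDerivAt_id s).const_mul (2 : ℝ)).smul_const v
        simpa using this
      have := (h1.sub h2).sub h3
      refine this.congr_deriv ?_
      abel
    have hbound : ∀ s ∈ Set.Ico (0 : ℝ) a,
        ‖deriv γ (t + s) + deriv γ (t - s) - (2 : ℝ) • v‖ ≤ 2 * M * s := by
      intro s hs
      obtain ⟨hs0, hsa⟩ := hs
      have hsk : s ≤ (k : ℝ) * h := le_trans hsa.le hak
      have hmem1 : t + s ∈ Set.Icc (t - k * h) (t + k * h) := by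
        constructor <;> nlinarith
      have hmem2 : t - s ∈ Set.Icc (t - k * h) (t + k * h) := by
        constructor <;> nlinarith
      have e1 := hlip _ hmem1
      have e2 := hlip _ hmem2
      rw [show t + s - t = s by ring] at e1
      rw [show t - s - t = -s by ring] at e2
      have habs : |s| = s := abs_of_nonneg hs0
      have habs' : |(-s : ℝ)| = s := by rw [abs_neg, habs]
      rw [habs] at e1
      rw [habs'] at e2
      calc ‖deriv γ (t + s) + deriv γ (t - s) - (2 : ℝ) • v‖
          = ‖(deriv γ (t + s) - v) + (deriv γ (t - s) - v)‖ := by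
            congr 1
            rw [two_smul]
            abel
        _ ≤ ‖deriv γ (t + s) - v‖ + ‖deriv γ (t - s) - v‖ := norm_add_le _ _
        _ ≤ M * s + M * s := add_le_add e1 e2
        _ = 2 * M * s := by ring
    have hgnorm : ‖g a‖ ≤ M * a ^ 2 := by
      have h0 : ‖g 0‖ ≤ M * (0 : ℝ) ^ 2 := by
        simp [hg]
      have hB : ∀ x : ℝ, HasDerivAt (fun s : ℝ => M * s ^ 2) (2 * M * x) x := by
        intro x
        have := ((hasDerivAt_pow 2 x).const_mul M)
        refine this.congr_deriv ?_
        ring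
      have := image_norm_le_of_norm_deriv_right_le_deriv_boundary
        (f := g) (f' := fun s => deriv γ (t + s) + deriv γ (t - s) - (2 : ℝ) • v)
        (a := 0) (b := a)
        (fun x _ => (hgderiv x).continuousAt.continuousWithinAt)
        (fun x _ => (hgderiv x).hasDerivWithinAt)
        h0 hB hbound
      exact this (Set.right_mem_Icc.mpr ha.le)
    have ha2 : (0 : ℝ) < 2 * a := by linarith
    have : deriv γ t - (2 * a)⁻¹ • (γ (t + a) - γ (t - a)) = -((2 * a)⁻¹ • g a) := by
      simp only [hg, hv]
      match_scalars <;> field_simp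
    rw [this, norm_neg, norm_smul, Real.norm_eq_abs, abs_of_pos (inv_pos.mpr ha2)]
    calc (2 * a)⁻¹ * ‖g a‖ ≤ (2 * a)⁻¹ * (M * a ^ 2) := by
          apply mul_le_mul_of_nonneg_left hgnorm (inv_pos.mpr ha2).le
      _ = M * a / 2 := by field_simp
  -- Rewrite the LHS as an average of errors
  have hk0 : (k : ℝ) ≠ 0 := by positivity
  have hrw : deriv γ t -
      (1 / (k : ℝ)) • ∑ j ∈ Finset.Icc 1 k,
        (2 * (j : ℝ) * h)⁻¹ • (γ (t + j * h) - γ (t - j * h))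
      = (1 / (k : ℝ)) • ∑ j ∈ Finset.Icc 1 k,
        (deriv γ t - (2 * ((j : ℝ) * h))⁻¹ • (γ (t + j * h) - γ (t - j * h))) := by
    have e : ∑ j ∈ Finset.Icc 1 k, (2 * (j : ℝ) * h)⁻¹ • (γ (t + j * h) - γ (t - j * h))
        = ∑ j ∈ Finset.Icc 1 k, (2 * ((j : ℝ) * h))⁻¹ • (γ (t + j * h) - γ (t - j * h)) :=
      Finset.sum_congr rfl fun j _ => by rw [mul_assoc]
    rw [e, Finset.sum_sub_distrib, smul_sub, Finset.sum_const, Nat.card_Icc,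
      Nat.add_sub_cancel, ← Nat.cast_smul_eq_nsmul ℝ, smul_smul, one_div,
      inv_mul_cancel₀ hk0, one_smul]
  rw [hrw, norm_smul, Real.norm_eq_abs, abs_of_pos (by positivity : (0:ℝ) < 1 / k)]
  have hbound2 : ‖∑ j ∈ Finset.Icc 1 k,
      (deriv γ t - (2 * ((j : ℝ) * h))⁻¹ • (γ (t + j * h) - γ (t - j * h)))‖
      ≤ ∑ j ∈ Finset.Icc 1 k, M * ((j : ℝ) * h) / 2 := by
    refine norm_sum_le_of_le _ fun j hj => ?_
    obtain ⟨hj1, hjk⟩ := Finset.mem_Icc.mp hj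
    have hj0 : (0 : ℝ) < (j : ℝ) * h := by
      have : (1 : ℝ) ≤ (j : ℝ) := by exact_mod_cast hj1
      nlinarith
    have hjkh : (j : ℝ) * h ≤ (k : ℝ) * h := by
      have : (j : ℝ) ≤ (k : ℝ) := by exact_mod_cast hjk
      nlinarith
    exact key _ hj0 hjkh
  have hsumj := sum_Icc_id_real k
  calc (1 / (k : ℝ)) * ‖∑ j ∈ Finset.Icc 1 k,
        (deriv γ t - (2 * ((j : ℝ) * h))⁻¹ • (γ (t + j * h) - γ (t - j * h)))‖
      ≤ (1 / (k : ℝ)) * ∑ j ∈ Finset.Icc 1 k, M * ((j : ℝ) * h) / 2 := by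
        apply mul_le_mul_of_nonneg_left hbound2 (by positivity)
    _ = (1 / (k : ℝ)) * (M * h / 2 * ((k : ℝ) * ((k : ℝ) + 1) / 2)) := by
        congr 1
        rw [← hsumj, Finset.mul_sum]
        apply Finset.sum_congr rfl
        intro j _
        ring
    _ ≤ ((k : ℝ) * h / 2) * M := by
        have hk1 : (1 : ℝ) ≤ (k : ℝ) := by exact_mod_cast hk
        rw [div_mul_eq_mul_div, one_mul]
        rw [div_le_iff₀ (by positivity : (0:ℝ) < (k:ℝ))]
        have hMh : 0 ≤ M * h := mul_nonneg hM0 hh.le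
        nlinarith [mul_nonneg (mul_nonneg hMh (by positivity : (0:ℝ) ≤ (k:ℝ)))
          (sub_nonneg.mpr hk1)]
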